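/- Let b > 1. The solution of the radially symmetric heat equation on ℝ³ \ B₁(0) with Dirichlet boundary condition and initial data φ = 𝟙_{ρ > b} satisfies: for every fixed r > 1, (S₁(t)φ)(r) = (√t/(r√π))(e^{-(b−r)²/(4t)} − e^{-(b+r−2)²/(4t)}) + (1/√π) ∫_{(b−r)/(2√t)}^∞ e^{-z²} dz + ((r−2)/(r√π)) ∫_{(b+r−2)/(2√t)}^∞ e^{-z²} dz, and consequently (S₁(t)φ)(r) → 1 − 1/r as t → ∞. -/

import Mathlib

open Real MeasureTheory Filter Topology

section Aux

open Set

private lemma shift_Ioi' (G : ℝ → ℝ) (b a : ℝ) :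
    ∫ x in Ioi b, G (x + a) = ∫ u in Ioi (b + a), G u := by
  have h := (measurePreserving_add_right (volume : Measure ℝ) a).setIntegral_preimage_emb
    (measurableEmbedding_addRight a) G (Ioi (b + a))
  simpa [preimage_add_const_Ioi] using h

private lemma sqrt_tendsto' : Tendsto Real.sqrt atTop atTop := by
  rw [tendsto_atTop_atTop]
  intro M
  refine ⟨(max M 0) ^ 2, fun x hx => le_trans (le_max_left M 0) ?_⟩
  rw [← Real.sqrt_sq (le_max_right M 0)]
  exact Real.sqrt_le_sqrt hx

private lemma moment_int' {t : ℝ} (ht : 0 < t) (c : ℝ) :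
    ∫ x in Ioi c, x * Real.exp (-x ^ 2 / (4 * t)) = 2 * t * Real.exp (-c ^ 2 / (4 * t)) := by
  have hk : (0:ℝ) < 1 / (4 * t) := by positivity
  have hint : IntegrableOn (fun x => x * Real.exp (-x ^ 2 / (4 * t))) (Ioi c) := by
    have := (integrable_mul_exp_neg_mul_sq hk).integrableOn (s := Ioi c)
    refine this.congr_fun (fun x _ => ?_) measurableSet_Ioi
    beta_reduce
    rw [show -(1 / (4 * t)) * x ^ 2 = -x ^ 2 / (4 * t) by ring]
  have hderiv : ∀ x ∈ Ici c,
      HasDerivAt (fun x => -(2 * t) * Real.exp (-x ^ 2 / (4 * t)))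
        (x * Real.exp (-x ^ 2 / (4 * t))) x := by
    intro x _
    have h1 : HasDerivAt (fun x : ℝ => -x ^ 2 / (4 * t)) (-(2 * x) / (4 * t)) x := by
      simpa using ((hasDerivAt_pow 2 x).neg.div_const (4 * t))
    have h2 := (h1.exp).const_mul (-(2 * t))
    refine h2.congr_deriv ?_
    field_simp
    ring
  have htend : Tendsto (fun x => -(2 * t) * Real.exp (-x ^ 2 / (4 * t))) atTop (𝓝 0) := by
    have h3 : Tendsto (fun x : ℝ => -x ^ 2 / (4 * t)) atTop atBot := by
      have := (tendsto_pow_atTop (two_ne_zero)).atTop_div_const (by positivity : (0:ℝ) < 4 * t)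
      exact tendsto_neg_atBot_iff.mpr this |>.congr (fun x => by ring)
    have := (Real.tendsto_exp_atBot).comp h3
    simpa using this.const_mul (-(2 * t))
  have := integral_Ioi_of_hasDerivAt_of_tendsto' hderiv hint htend
  rw [this]
  ring

private lemma gauss_sub' {t : ℝ} (ht : 0 < t) (c : ℝ) :
    ∫ x in Ioi c, Real.exp (-x ^ 2 / (4 * t))
      = 2 * Real.sqrt t * ∫ z in Ioi (c / (2 * Real.sqrt t)), Real.exp (-z ^ 2) := by
  have hs : (0:ℝ) < Real.sqrt t := Real.sqrt_pos.mpr ht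
  have hb : (0:ℝ) < 1 / (2 * Real.sqrt t) := by positivity
  have h := integral_comp_mul_left_Ioi (fun z => Real.exp (-z ^ 2)) c hb
  have hsq : (Real.sqrt t) ^ 2 = t := Real.sq_sqrt ht.le
  have heq : ∀ x : ℝ, Real.exp (-(1 / (2 * Real.sqrt t) * x) ^ 2)
      = Real.exp (-x ^ 2 / (4 * t)) := by
    intro x
    have h4 : (2 * Real.sqrt t) ^ 2 = 4 * t := by rw [mul_pow, hsq]; norm_num
    congr 1
    rw [mul_pow, div_pow, one_pow, h4]
    ring
  rw [show (1 / (2 * Real.sqrt t)) * c = c / (2 * Real.sqrt t) by ring] at h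
  calc ∫ x in Ioi c, Real.exp (-x ^ 2 / (4 * t))
      = ∫ x in Ioi c, (fun z => Real.exp (-z ^ 2)) (1 / (2 * Real.sqrt t) * x) := by
        refine setIntegral_congr_fun measurableSet_Ioi (fun x _ => ?_)
        exact (heq x).symm
    _ = (1 / (2 * Real.sqrt t))⁻¹ • ∫ z in Ioi (c / (2 * Real.sqrt t)), Real.exp (-z ^ 2) := h
    _ = 2 * Real.sqrt t * ∫ z in Ioi (c / (2 * Real.sqrt t)), Real.exp (-z ^ 2) := by
        rw [smul_eq_mul, one_div, inv_inv]

private noncomputable def Ftail (u : ℝ) : ℝ := ∫ z in Ioi u, Real.exp (-z ^ 2)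

private lemma gauss_integrable' : Integrable (fun z : ℝ => Real.exp (-z ^ 2)) := by
  have := integrable_exp_neg_mul_sq (b := 1) one_pos
  simpa using this

private lemma Ftail_continuous : Continuous Ftail := by
  have hint := gauss_integrable'
  have h1 : ∀ u : ℝ, Ftail u
      = (∫ z : ℝ, Real.exp (-z ^ 2)) - ((∫ z in Iic (0:ℝ), Real.exp (-z ^ 2))
        + ∫ z in (0:ℝ)..u, Real.exp (-z ^ 2)) := by
    intro u
    have h2 := intervalIntegral.integral_Iic_add_Ioi (b := u) (f := fun z : ℝ => Real.exp (-z ^ 2))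
      hint.integrableOn hint.integrableOn
    have h3 := intervalIntegral.integral_Iic_sub_Iic (f := fun z : ℝ => Real.exp (-z ^ 2))
      (μ := volume) hint.integrableOn hint.integrableOn (a := 0) (b := u)
    rw [Ftail, ← h2, ← h3]
    ring
  rw [show Ftail = fun u => (∫ z : ℝ, Real.exp (-z ^ 2))
      - ((∫ z in Iic (0:ℝ), Real.exp (-z ^ 2)) + ∫ z in (0:ℝ)..u, Real.exp (-z ^ 2))
    from funext h1]
  exact (continuous_const.sub (continuous_const.add
    (intervalIntegral.continuous_primitive (fun a b => hint.intervalIntegrable) 0)))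

private lemma Ftail_comp (c : ℝ) :
    Tendsto (fun t : ℝ => Ftail (c / (2 * Real.sqrt t))) atTop (𝓝 (Real.sqrt π / 2)) := by
  have harg : Tendsto (fun t : ℝ => c / (2 * Real.sqrt t)) atTop (𝓝 0) := by
    apply Tendsto.div_atTop (tendsto_const_nhds)
    exact (sqrt_tendsto'.const_mul_atTop two_pos)
  have h0 : Ftail 0 = Real.sqrt π / 2 := by
    rw [Ftail]
    have := integral_gaussian_Ioi 1
    simpa using this
  have := (Ftail_continuous.tendsto 0).comp harg
  rwa [h0] at this

end Aux

/-- The radially symmetric Dirichlet heat semigroup on ℝ³ \ B₁(0), applied to the indicator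
function of {ρ > b}. -/
noncomputable def S1ind (b t r : ℝ) : ℝ :=
  (1 / (r * Real.sqrt (4 * π * t))) *
    ∫ ρ in Set.Ioi b,
      (Real.exp (-(r - ρ) ^ 2 / (4 * t)) - Real.exp (-(r + ρ - 2) ^ 2 / (4 * t))) * ρ

private lemma formula (b : ℝ) (r : ℝ) (hr : 1 < r) (t : ℝ) (ht : 0 < t) :
    S1ind b t r =
      (Real.sqrt t / (r * Real.sqrt π)) *
          (Real.exp (-(b - r) ^ 2 / (4 * t)) - Real.exp (-(b + r - 2) ^ 2 / (4 * t)))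
        + (1 / Real.sqrt π) * (∫ z in Set.Ioi ((b - r) / (2 * Real.sqrt t)), Real.exp (-z ^ 2))
        + ((r - 2) / (r * Real.sqrt π)) *
            ∫ z in Set.Ioi ((b + r - 2) / (2 * Real.sqrt t)), Real.exp (-z ^ 2) := by
  open Set in
  have hk : (0:ℝ) < 1 / (4 * t) := by positivity
  have hrw : (fun x : ℝ => Real.exp (-x ^ 2 / (4 * t)))
      = fun x => Real.exp (-(1 / (4 * t)) * x ^ 2) := by
    funext x; congr 1; ring
  have g0 : Integrable (fun x : ℝ => Real.exp (-x ^ 2 / (4 * t))) := by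
    rw [hrw]; exact integrable_exp_neg_mul_sq hk
  have g1 : Integrable (fun x : ℝ => x * Real.exp (-x ^ 2 / (4 * t))) := by
    have := integrable_mul_exp_neg_mul_sq hk
    refine this.congr (Eventually.of_forall fun x => ?_)
    show x * Real.exp (-(1 / (4 * t)) * x ^ 2) = x * Real.exp (-x ^ 2 / (4 * t))
    rw [show -(1 / (4 * t)) * x ^ 2 = -x ^ 2 / (4 * t) by ring]
  have hG1 : Integrable (fun u : ℝ => Real.exp (-u ^ 2 / (4 * t)) * (u + r)) := by
    refine (g1.add (g0.const_mul r)).congr (Eventually.of_forall fun u => ?_)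
    simp only [Pi.add_apply]; ring
  have hG2 : Integrable (fun u : ℝ => Real.exp (-u ^ 2 / (4 * t)) * (u - (r - 2))) := by
    refine (g1.sub (g0.const_mul (r - 2))).congr (Eventually.of_forall fun u => ?_)
    simp only [Pi.sub_apply]; ring
  have e1 : ∀ x : ℝ, Real.exp (-(r - x) ^ 2 / (4 * t)) * x
      = (fun u : ℝ => Real.exp (-u ^ 2 / (4 * t)) * (u + r)) (x + (-r)) := by
    intro x; simp only
    rw [show -(x + -r) ^ 2 = -(r - x) ^ 2 by ring, show x + -r + r = x by ring]
  have e2 : ∀ x : ℝ, Real.exp (-(r + x - 2) ^ 2 / (4 * t)) * x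
      = (fun u : ℝ => Real.exp (-u ^ 2 / (4 * t)) * (u - (r - 2))) (x + (r - 2)) := by
    intro x; simp only
    rw [show -(x + (r - 2)) ^ 2 = -(r + x - 2) ^ 2 by ring,
      show x + (r - 2) - (r - 2) = x by ring]
  have hint1 : IntegrableOn (fun x : ℝ => Real.exp (-(r - x) ^ 2 / (4 * t)) * x) (Ioi b) := by
    refine ((hG1.comp_add_right (-r)).integrableOn (s := Ioi b)).congr_fun
      (fun x _ => (e1 x).symm) measurableSet_Ioi
  have hint2 : IntegrableOn (fun x : ℝ => Real.exp (-(r + x - 2) ^ 2 / (4 * t)) * x) (Ioi b) := by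
    refine ((hG2.comp_add_right (r - 2)).integrableOn (s := Ioi b)).congr_fun
      (fun x _ => (e2 x).symm) measurableSet_Ioi
  have hI1 : ∫ x in Ioi b, Real.exp (-(r - x) ^ 2 / (4 * t)) * x
      = 2 * t * Real.exp (-(b - r) ^ 2 / (4 * t))
        + r * (2 * Real.sqrt t * ∫ z in Ioi ((b - r) / (2 * Real.sqrt t)), Real.exp (-z ^ 2)) := by
    rw [setIntegral_congr_fun measurableSet_Ioi (fun x _ => e1 x),
      shift_Ioi' (fun u : ℝ => Real.exp (-u ^ 2 / (4 * t)) * (u + r)) b (-r),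
      show b + -r = b - r by ring]
    have hsplit : ∫ u in Ioi (b - r), Real.exp (-u ^ 2 / (4 * t)) * (u + r)
        = (∫ u in Ioi (b - r), u * Real.exp (-u ^ 2 / (4 * t)))
          + ∫ u in Ioi (b - r), r * Real.exp (-u ^ 2 / (4 * t)) := by
      rw [← integral_add (g1.integrableOn) ((g0.const_mul r).integrableOn)]
      exact setIntegral_congr_fun measurableSet_Ioi (fun u _ => by ring)
    rw [hsplit, moment_int' ht, integral_const_mul, gauss_sub' ht]
  have hI2 : ∫ x in Ioi b, Real.exp (-(r + x - 2) ^ 2 / (4 * t)) * x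
      = 2 * t * Real.exp (-(b + r - 2) ^ 2 / (4 * t))
        - (r - 2) * (2 * Real.sqrt t
            * ∫ z in Ioi ((b + r - 2) / (2 * Real.sqrt t)), Real.exp (-z ^ 2)) := by
    rw [setIntegral_congr_fun measurableSet_Ioi (fun x _ => e2 x),
      shift_Ioi' (fun u : ℝ => Real.exp (-u ^ 2 / (4 * t)) * (u - (r - 2))) b (r - 2),
      show b + (r - 2) = b + r - 2 by ring]
    have hsplit : ∫ u in Ioi (b + r - 2), Real.exp (-u ^ 2 / (4 * t)) * (u - (r - 2))
        = (∫ u in Ioi (b + r - 2), u * Real.exp (-u ^ 2 / (4 * t)))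
          - ∫ u in Ioi (b + r - 2), (r - 2) * Real.exp (-u ^ 2 / (4 * t)) := by
      rw [← integral_sub (g1.integrableOn) ((g0.const_mul (r - 2)).integrableOn)]
      exact setIntegral_congr_fun measurableSet_Ioi (fun u _ => by ring)
    rw [hsplit, moment_int' ht, integral_const_mul, gauss_sub' ht]
  have hsqrtpi : Real.sqrt (4 * π * t) = 2 * (Real.sqrt π * Real.sqrt t) := by
    rw [show 4 * π * t = (2 * (Real.sqrt π * Real.sqrt t)) ^ 2 by
      rw [mul_pow, mul_pow, Real.sq_sqrt Real.pi_pos.le, Real.sq_sqrt ht.le]; ring]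
    exact Real.sqrt_sq (by positivity)
  have hsub : ∫ ρ in Set.Ioi b,
      (Real.exp (-(r - ρ) ^ 2 / (4 * t)) - Real.exp (-(r + ρ - 2) ^ 2 / (4 * t))) * ρ
      = (∫ x in Ioi b, Real.exp (-(r - x) ^ 2 / (4 * t)) * x)
        - ∫ x in Ioi b, Real.exp (-(r + x - 2) ^ 2 / (4 * t)) * x := by
    rw [← integral_sub hint1 hint2]
    exact setIntegral_congr_fun measurableSet_Ioi (fun x _ => by ring)
  rw [S1ind, hsub, hI1, hI2, hsqrtpi]
  have hrne : r ≠ 0 := by linarith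
  have hpine : Real.sqrt π ≠ 0 := ne_of_gt (Real.sqrt_pos.mpr Real.pi_pos)
  have hsne : Real.sqrt t ≠ 0 := ne_of_gt (Real.sqrt_pos.mpr ht)
  have hmul : t = Real.sqrt t * Real.sqrt t := (Real.mul_self_sqrt ht.le).symm
  set E1 := Real.exp (-(b - r) ^ 2 / (4 * t)) with hE1
  set E2 := Real.exp (-(b + r - 2) ^ 2 / (4 * t)) with hE2
  set JA := ∫ z in Set.Ioi ((b - r) / (2 * Real.sqrt t)), Real.exp (-z ^ 2) with hJA
  set JB := ∫ z in Set.Ioi ((b + r - 2) / (2 * Real.sqrt t)), Real.exp (-z ^ 2) with hJB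
  set s := Real.sqrt t with hsdef
  rw [show (2:ℝ) * t * E1 = 2 * (s * s) * E1 by rw [← hmul],
    show (2:ℝ) * t * E2 = 2 * (s * s) * E2 by rw [← hmul]]
  field_simp
  ring

private lemma term1_tendsto (b : ℝ) (hb : 1 < b) (r : ℝ) (hr : 1 < r) :
    Tendsto (fun t : ℝ => (Real.sqrt t / (r * Real.sqrt π)) *
        (Real.exp (-(b - r) ^ 2 / (4 * t)) - Real.exp (-(b + r - 2) ^ 2 / (4 * t))))
      atTop (𝓝 0) := by
  have hrpos : (0:ℝ) < r := by linarith
  have hpipos : (0:ℝ) < Real.sqrt π := Real.sqrt_pos.mpr Real.pi_pos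
  have hac : (b - r) ^ 2 ≤ (b + r - 2) ^ 2 := by nlinarith
  apply squeeze_zero'
  · filter_upwards [Ioi_mem_atTop (0:ℝ)] with t ht
    have ht : (0:ℝ) < t := ht
    have h4t : (0:ℝ) < 4 * t := by linarith
    have hEE : Real.exp (-(b + r - 2) ^ 2 / (4 * t)) ≤ Real.exp (-(b - r) ^ 2 / (4 * t)) := by
      apply Real.exp_le_exp.mpr
      apply div_le_div_of_nonneg_right ?_ h4t.le
      linarith
    exact mul_nonneg (by positivity) (by linarith)
  · filter_upwards [Ioi_mem_atTop (0:ℝ)] with t ht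
    have ht : (0:ℝ) < t := ht
    have hspos : (0:ℝ) < Real.sqrt t := Real.sqrt_pos.mpr ht
    set u : ℝ := ((b + r - 2) ^ 2 - (b - r) ^ 2) / (4 * t) with hu
    have hu0 : 0 ≤ u := by rw [hu]; exact div_nonneg (by linarith) (by linarith)
    have hdiff : Real.exp (-(b - r) ^ 2 / (4 * t)) - Real.exp (-(b + r - 2) ^ 2 / (4 * t))
        ≤ u := by
      have hsplit : Real.exp (-(b + r - 2) ^ 2 / (4 * t))
          = Real.exp (-(b - r) ^ 2 / (4 * t)) * Real.exp (-u) := by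
        rw [← Real.exp_add]
        congr 1
        rw [hu]
        field_simp
        ring
      have h1 : 1 - u ≤ Real.exp (-u) := by
        have := Real.add_one_le_exp (-u)
        linarith
      have h2 : Real.exp (-(b - r) ^ 2 / (4 * t)) ≤ 1 := by
        apply Real.exp_le_one_iff.mpr
        rw [neg_div, neg_nonpos]
        positivity
      have h3 : (0:ℝ) < Real.exp (-(b - r) ^ 2 / (4 * t)) := Real.exp_pos _
      nlinarith
    calc (Real.sqrt t / (r * Real.sqrt π)) *
          (Real.exp (-(b - r) ^ 2 / (4 * t)) - Real.exp (-(b + r - 2) ^ 2 / (4 * t)))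
        ≤ (Real.sqrt t / (r * Real.sqrt π)) * u :=
          mul_le_mul_of_nonneg_left hdiff (by positivity)
      _ = (((b + r - 2) ^ 2 - (b - r) ^ 2) / (4 * (r * Real.sqrt π))) / Real.sqrt t := by
          rw [hu]
          field_simp
          conv_rhs => rw [← Real.mul_self_sqrt ht.le]
          ring
  · exact Tendsto.div_atTop tendsto_const_nhds sqrt_tendsto'

theorem stmt_16 (b : ℝ) (hb : 1 < b) (r : ℝ) (hr : 1 < r) :
    (∀ t : ℝ, 0 < t →
        S1ind b t r =
          (Real.sqrt t / (r * Real.sqrt π)) *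
              (Real.exp (-(b - r) ^ 2 / (4 * t)) - Real.exp (-(b + r - 2) ^ 2 / (4 * t)))
            + (1 / Real.sqrt π) * (∫ z in Set.Ioi ((b - r) / (2 * Real.sqrt t)), Real.exp (-z ^ 2))
            + ((r - 2) / (r * Real.sqrt π)) *
                ∫ z in Set.Ioi ((b + r - 2) / (2 * Real.sqrt t)), Real.exp (-z ^ 2))
      ∧ Tendsto (fun t => S1ind b t r) atTop (𝓝 (1 - 1 / r)) := by
  have hrne : r ≠ 0 := by linarith
  have hpine : Real.sqrt π ≠ 0 := ne_of_gt (Real.sqrt_pos.mpr Real.pi_pos)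
  refine ⟨fun t ht => formula b r hr t ht, ?_⟩
  have h2 := (Ftail_comp (b - r)).const_mul (1 / Real.sqrt π)
  have h3 := (Ftail_comp (b + r - 2)).const_mul ((r - 2) / (r * Real.sqrt π))
  have hsum := ((term1_tendsto b hb r hr).add h2).add h3
  have hval : (0 + 1 / Real.sqrt π * (Real.sqrt π / 2)
      + (r - 2) / (r * Real.sqrt π) * (Real.sqrt π / 2)) = 1 - 1 / r := by
    field_simp
    ring
  rw [hval] at hsum
  refine Tendsto.congr' ?_ hsum
  filter_upwards [Ioi_mem_atTop (0:ℝ)] with t ht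
  exact (formula b r hr t ht).symm
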